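/- arXiv:1407.5783 — 3 statements merged into one kernel-verified Lean document; each statement's English description precedes it below -/
import Mathlib

section
/- (Theorem 1.) The functions f(·; ε) and g are increasing in x on the set of CCDF vectors: for all x, x' ∈ ℝ^m with 1 ≥ x_1 ≥ x_2 ≥ … ≥ x_m ≥ 0, 1 ≥ x'_1 ≥ x'_2 ≥ … ≥ x'_m ≥ 0 and x_i ≤ x'_i for all i, one has f(x; ε)_i ≤ f(x'; ε)_i and g(x)_i ≤ g(x')_i for all 1 ≤ i ≤ m. -/
open scoped BigOperators

noncomputable section

/-- Number of `j`-dimensional subspaces `U` of `𝔽₂^m` whose intersection with `W`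
has dimension `k`. -/
def numInter (m j k : ℕ) (W : Submodule (ZMod 2) (Fin m → ZMod 2)) : ℕ :=
  Set.ncard {U : Submodule (ZMod 2) (Fin m → ZMod 2) |
    Module.finrank (ZMod 2) U = j ∧ Module.finrank (ZMod 2) ↥(U ⊓ W) = k}

/-- Number of `j`-dimensional subspaces `U` of `𝔽₂^m` whose sum with `W`
has dimension `k`. -/
def numSum (m j k : ℕ) (W : Submodule (ZMod 2) (Fin m → ZMod 2)) : ℕ :=
  Set.ncard {U : Submodule (ZMod 2) (Fin m → ZMod 2) |
    Module.finrank (ZMod 2) U = j ∧ Module.finrank (ZMod 2) ↥(U ⊔ W) = k}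

/-- Number of `j`-dimensional subspaces of `𝔽₂^m`. -/
def numDim (m j : ℕ) : ℕ :=
  Set.ncard {U : Submodule (ZMod 2) (Fin m → ZMod 2) | Module.finrank (ZMod 2) U = j}

/-- A canonical `i`-dimensional subspace of `𝔽₂^m` (for `i ≤ m`): vectors supported on
the first `i` coordinates. -/
def stdW (m i : ℕ) : Submodule (ZMod 2) (Fin m → ZMod 2) :=
  Submodule.span (ZMod 2) {x | ∀ t : Fin m, i ≤ (t : ℕ) → x t = 0}

/-- `V^m_{i,j,k}`: probability that a uniformly random `j`-dimensional subspace `U`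
of `𝔽₂^m` satisfies `dim (U ⊓ W) = k`, for a fixed `i`-dimensional subspace `W`. -/
def Vprob (m i j k : ℕ) : ℝ := (numInter m j k (stdW m i) : ℝ) / (numDim m j : ℝ)

/-- `C^m_{i,j,k}`: probability that a uniformly random `j`-dimensional subspace `U`
of `𝔽₂^m` satisfies `dim (U ⊔ W) = k`, for a fixed `i`-dimensional subspace `W`. -/
def Cprob (m i j k : ℕ) : ℝ := (numSum m j k (stdW m i) : ℝ) / (numDim m j : ℝ)

/-- The operation `⊡`. -/
def boxdot (m : ℕ) (a b : Fin (m+1) → ℝ) : Fin (m+1) → ℝ :=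
  fun k => ∑ i : Fin (m+1), ∑ j : Fin (m+1), Vprob m i j k * a i * b j

/-- The operation `⊠`. -/
def boxtimes (m : ℕ) (a b : Fin (m+1) → ℝ) : Fin (m+1) → ℝ :=
  fun k => ∑ i : Fin (m+1), ∑ j : Fin (m+1), Cprob m i j k * a i * b j

/-- `boxdotPow m n a = ⊡^{n+1} a` (the `(n+1)`-fold `⊡`-product of `a` with itself). -/
def boxdotPow (m : ℕ) : ℕ → (Fin (m+1) → ℝ) → (Fin (m+1) → ℝ)
  | 0, a => a
  | n+1, a => boxdot m a (boxdotPow m n a)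

/-- `boxtimesPow m n a = ⊠^{n+1} a` (the `(n+1)`-fold `⊠`-product of `a` with itself). -/
def boxtimesPow (m : ℕ) : ℕ → (Fin (m+1) → ℝ) → (Fin (m+1) → ℝ)
  | 0, a => a
  | n+1, a => boxtimes m a (boxtimesPow m n a)

/-- `p∘(ε)`. -/
def pcirc (m : ℕ) (ε : ℝ) : Fin (m+1) → ℝ :=
  fun i => (m.choose i : ℝ) * ε ^ (i : ℕ) * (1 - ε) ^ (m - (i : ℕ))

/-- `f∘(y∘; ε) = p∘(ε) ⊡ (⊡^{d_v − 1} y∘)`. -/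
def fcirc (m dv : ℕ) (ε : ℝ) (y : Fin (m+1) → ℝ) : Fin (m+1) → ℝ :=
  boxdot m (pcirc m ε) (boxdotPow m (dv - 2) y)

/-- `g∘(x∘) = ⊠^{d_c − 1} x∘`. -/
def gcirc (m dc : ℕ) (x : Fin (m+1) → ℝ) : Fin (m+1) → ℝ :=
  boxtimesPow m (dc - 2) x

/-- Extension of `x ∈ ℝ^m` (indexed `1,…,m`) to `ℕ` with conventions `x_0 = 1`,
`x_i = 0` for `i > m`. -/
def extSeq (m : ℕ) (x : Fin m → ℝ) : ℕ → ℝ :=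
  fun i => if _h0 : i = 0 then 1 else if h : i ≤ m then x ⟨i - 1, by omega⟩ else 0

/-- `x̃ ∈ ℝ^{m+1}` with `x̃_i = x_i − x_{i+1}`. -/
def tilde (m : ℕ) (x : Fin m → ℝ) : Fin (m+1) → ℝ :=
  fun i => extSeq m x i - extSeq m x ((i : ℕ) + 1)

/-- `f(y; ε)_i = Σ_{k=i}^m f∘(ỹ; ε)_k` (here `i : Fin m` denotes the index `i+1 ∈ {1,…,m}`). -/
def fFun (m dv : ℕ) (ε : ℝ) (y : Fin m → ℝ) : Fin m → ℝ :=
  fun i => ∑ k : Fin (m+1), if (i : ℕ) + 1 ≤ (k : ℕ) then fcirc m dv ε (tilde m y) k else 0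

/-- `g(x)_i = Σ_{k=i}^m g∘(x̃)_k`. -/
def gFun (m dc : ℕ) (x : Fin m → ℝ) : Fin m → ℝ :=
  fun i => ∑ k : Fin (m+1), if (i : ℕ) + 1 ≤ (k : ℕ) then gcirc m dc (tilde m x) k else 0

/-- `p(ε)_i = Σ_{k=i}^m p∘_k(ε)`. -/
def pFun (m : ℕ) (ε : ℝ) : Fin m → ℝ :=
  fun i => ∑ k : Fin (m+1), if (i : ℕ) + 1 ≤ (k : ℕ) then pcirc m ε k else 0

/-- `X_ε = {x ∈ ℝ^m : 0 ≤ x_i ≤ p(ε)_i}`. -/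
def Xset (m : ℕ) (ε : ℝ) : Set (Fin m → ℝ) := {x | ∀ i, 0 ≤ x i ∧ x i ≤ pFun m ε i}

/-- `Y = [0,1]^m`. -/
def Yset (m : ℕ) : Set (Fin m → ℝ) := {y | ∀ i, 0 ≤ y i ∧ y i ≤ 1}

/-- The continuous linear map `v ↦ Σ_s c_s v_s`, i.e. the row vector `c` viewed as a
linear functional; used to express gradients. -/
def rowDeriv (m : ℕ) (c : Fin m → ℝ) : (Fin m → ℝ) →L[ℝ] ℝ :=
  ∑ s : Fin m, c s • (ContinuousLinearMap.proj s : (Fin m → ℝ) →L[ℝ] ℝ)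

/-- The potential function `U(x; ε) = g(x) D xᵀ − G(x) − F(g(x); ε)` (with `ε` fixed,
absorbed into `F`). -/
def Upot (m dc : ℕ) (D : Matrix (Fin m) (Fin m) ℝ) (F G : (Fin m → ℝ) → ℝ)
    (x : Fin m → ℝ) : ℝ :=
  (∑ a : Fin m, ∑ b : Fin m, gFun m dc x a * D a b * x b) - G x - F (gFun m dc x)


open Module Submodule Finset

section Comb
variable {m : ℕ}

local notation "G" => Submodule (ZMod 2) (Fin m → ZMod 2)

lemma frle (U : G) : finrank (ZMod 2) U ≤ m := by
  have := Submodule.finrank_le U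
  rwa [Module.finrank_fin_fun] at this

lemma ncard_eq_filter {α : Type*} [Fintype α] (p : α → Prop) [DecidablePred p] :
    Set.ncard {x | p x} = (Finset.univ.filter p).card := by
  have : {x | p x} = ↑(Finset.univ.filter p) := by ext; simp
  rw [this, Set.ncard_coe_finset]

theorem exists_mapEquiv (K V : Type*) [Field K] [AddCommGroup V] [Module K V]
    [FiniteDimensional K V]
    (W W' : Submodule K V) (h : finrank K W = finrank K W') :
    ∃ e : V ≃ₗ[K] V, W.map e.toLinearMap = W' := by
  obtain ⟨q, hq⟩ := Submodule.exists_isCompl W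
  obtain ⟨q', hq'⟩ := Submodule.exists_isCompl W'
  have hd : finrank K q = finrank K q' := by
    have h1 := Submodule.finrank_add_eq_of_isCompl hq
    have h2 := Submodule.finrank_add_eq_of_isCompl hq'
    omega
  let e1 : W ≃ₗ[K] W' := LinearEquiv.ofFinrankEq _ _ h
  let e2 : q ≃ₗ[K] q' := LinearEquiv.ofFinrankEq _ _ hd
  let e : V ≃ₗ[K] V :=
    ((Submodule.prodEquivOfIsCompl W q hq).symm.trans (e1.prodCongr e2)).trans
      (Submodule.prodEquivOfIsCompl W' q' hq')
  have key : ∀ w : W, e (w : V) = (e1 w : V) := by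
    intro w
    simp only [e, LinearEquiv.trans_apply]
    rw [Submodule.prodEquivOfIsCompl_symm_apply_left]
    simp [Submodule.coe_prodEquivOfIsCompl', LinearEquiv.prodCongr_apply]
  refine ⟨e, le_antisymm ?_ ?_⟩
  · rintro _ ⟨w, hw, rfl⟩
    simp only [LinearEquiv.coe_coe]
    rw [key ⟨w, hw⟩]
    exact (e1 ⟨w, hw⟩).2
  · intro w' hw'
    obtain ⟨w, hww⟩ := e1.surjective ⟨w', hw'⟩
    refine ⟨w, w.2, ?_⟩
    simp only [LinearEquiv.coe_coe]
    rw [key w, hww]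

lemma map_symm_of {K V : Type*} [Field K] [AddCommGroup V] [Module K V]
    {e : V ≃ₗ[K] V} {W W' : Submodule K V} (he : W.map e.toLinearMap = W') :
    W'.map e.symm.toLinearMap = W := by
  rw [← he, ← Submodule.map_comp]
  simp

lemma numInter_le_of_equiv {j k : ℕ} {W W' : G} (e : (Fin m → ZMod 2) ≃ₗ[ZMod 2] (Fin m → ZMod 2))
    (he : W.map e.toLinearMap = W') : numInter m j k W ≤ numInter m j k W' := by
  have hinj : Function.Injective (fun U : G => U.map e.toLinearMap) :=
    Submodule.map_injective_of_injective e.injective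
  rw [numInter, numInter, ← Set.ncard_image_of_injective _ hinj]
  apply Set.ncard_le_ncard _ (Set.toFinite _)
  rintro _ ⟨U, ⟨h1, h2⟩, rfl⟩
  dsimp only
  refine ⟨by rw [LinearEquiv.finrank_map_eq]; exact h1, ?_⟩
  rw [← he, ← Submodule.map_inf e.toLinearMap e.injective, LinearEquiv.finrank_map_eq]
  exact h2

lemma numSum_le_of_equiv {j k : ℕ} {W W' : G} (e : (Fin m → ZMod 2) ≃ₗ[ZMod 2] (Fin m → ZMod 2))
    (he : W.map e.toLinearMap = W') : numSum m j k W ≤ numSum m j k W' := by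
  have hinj : Function.Injective (fun U : G => U.map e.toLinearMap) :=
    Submodule.map_injective_of_injective e.injective
  rw [numSum, numSum, ← Set.ncard_image_of_injective _ hinj]
  apply Set.ncard_le_ncard _ (Set.toFinite _)
  rintro _ ⟨U, ⟨h1, h2⟩, rfl⟩
  dsimp only
  refine ⟨by rw [LinearEquiv.finrank_map_eq]; exact h1, ?_⟩
  rw [← he, ← Submodule.map_sup, LinearEquiv.finrank_map_eq]
  exact h2

theorem numInter_congr {j k : ℕ} {W W' : G}
    (h : finrank (ZMod 2) W = finrank (ZMod 2) W') :
    numInter m j k W = numInter m j k W' := by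
  obtain ⟨e, he⟩ := exists_mapEquiv _ _ W W' h
  exact le_antisymm (numInter_le_of_equiv e he) (numInter_le_of_equiv e.symm (map_symm_of he))

theorem numSum_congr {j k : ℕ} {W W' : G}
    (h : finrank (ZMod 2) W = finrank (ZMod 2) W') :
    numSum m j k W = numSum m j k W' := by
  obtain ⟨e, he⟩ := exists_mapEquiv _ _ W W' h
  exact le_antisymm (numSum_le_of_equiv e he) (numSum_le_of_equiv e.symm (map_symm_of he))

end Comb

section Comb2
variable {m : ℕ}
local notation "G" => Submodule (ZMod 2) (Fin m → ZMod 2)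

/-- The inclusion `(Fin i → ZMod 2) → (Fin m → ZMod 2)` by zero-extension. -/
def extMap (m i : ℕ) : (Fin i → ZMod 2) →ₗ[ZMod 2] (Fin m → ZMod 2) where
  toFun y := fun t => if h : (t : ℕ) < i then y ⟨t, h⟩ else 0
  map_add' := by intros a b; funext t; by_cases h : (t : ℕ) < i <;> simp [h]
  map_smul' := by intros a b; funext t; by_cases h : (t : ℕ) < i <;> simp [h]

lemma stdW_eq_range {i : ℕ} (him : i ≤ m) : stdW m i = LinearMap.range (extMap m i) := by
  apply le_antisymm
  · rw [stdW, Submodule.span_le]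
    intro x hx
    exact ⟨fun s => x ⟨s, lt_of_lt_of_le s.2 him⟩, by
      funext t
      by_cases h : (t : ℕ) < i
      · simp [extMap, h]
      · simp only [extMap, LinearMap.coe_mk, AddHom.coe_mk, dif_neg h]
        exact (hx t (by omega)).symm⟩
  · rintro _ ⟨y, rfl⟩
    apply Submodule.subset_span
    intro t ht
    simp [extMap, Nat.not_lt.mpr ht]

lemma finrank_stdW {i : ℕ} (him : i ≤ m) : finrank (ZMod 2) (stdW m i) = i := by
  rw [stdW_eq_range him, LinearMap.finrank_range_of_inj, Module.finrank_fin_fun]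
  intro y y' h
  funext s
  have := congrFun h ⟨s.1, lt_of_lt_of_le s.2 him⟩
  simpa [extMap, s.2] using this

lemma stdW_mono {i i' : ℕ} (h : i ≤ i') : stdW m i ≤ stdW m i' := by
  apply Submodule.span_mono
  intro x hx t ht
  exact hx t (le_trans h ht)

lemma sum_filter_card {α : Type*} [Fintype α] [DecidableEq α] {n : ℕ} (h : α → Fin n)
    (q : α → Prop) (P : Fin n → Prop) [DecidablePred q] [DecidablePred P] :
    ∑ k : Fin n, (if P k then (Finset.univ.filter fun U => q U ∧ h U = k).card else 0)
      = (Finset.univ.filter fun U => q U ∧ P (h U)).card := by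
  rw [Finset.card_eq_sum_card_fiberwise (f := h) (t := Finset.univ) (fun x _ => Finset.mem_univ _)]
  apply Finset.sum_congr rfl
  intro k _
  rw [Finset.filter_filter]
  by_cases hP : P k
  · rw [if_pos hP]
    apply congrArg
    apply Finset.filter_congr
    intro U _
    constructor
    · rintro ⟨h1, rfl⟩; exact ⟨⟨h1, hP⟩, rfl⟩
    · rintro ⟨⟨h1, _⟩, rfl⟩; exact ⟨h1, rfl⟩
  · rw [if_neg hP]
    symm
    rw [Finset.card_eq_zero, Finset.filter_eq_empty_iff]
    rintro U _ ⟨⟨_, hPU⟩, rfl⟩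
    exact hP hPU

lemma numInter_tail_sum (W : G) (j κ : ℕ) :
    ∑ k : Fin (m+1), (if κ ≤ (k : ℕ) then numInter m j (k : ℕ) W else 0)
      = Set.ncard {U : G | finrank (ZMod 2) U = j ∧ κ ≤ finrank (ZMod 2) ↥(U ⊓ W)} := by
  classical
  have hmap : ∀ U : G, finrank (ZMod 2) ↥(U ⊓ W) < m + 1 := fun U => by
    have := frle (U ⊓ W); omega
  rw [ncard_eq_filter]
  rw [← sum_filter_card (fun U : G => (⟨finrank (ZMod 2) ↥(U ⊓ W), hmap U⟩ : Fin (m+1)))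
    (fun U : G => finrank (ZMod 2) U = j) (fun k => κ ≤ (k : ℕ))]
  apply Finset.sum_congr rfl
  intro k _
  congr 1
  rw [numInter, ncard_eq_filter]
  apply congrArg
  apply Finset.filter_congr
  intro U _
  simp [Fin.ext_iff]

lemma numSum_tail_sum (W : G) (j κ : ℕ) :
    ∑ k : Fin (m+1), (if κ ≤ (k : ℕ) then numSum m j (k : ℕ) W else 0)
      = Set.ncard {U : G | finrank (ZMod 2) U = j ∧ κ ≤ finrank (ZMod 2) ↥(U ⊔ W)} := by
  classical
  have hmap : ∀ U : G, finrank (ZMod 2) ↥(U ⊔ W) < m + 1 := fun U => by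
    have := frle (U ⊔ W); omega
  rw [ncard_eq_filter]
  rw [← sum_filter_card (fun U : G => (⟨finrank (ZMod 2) ↥(U ⊔ W), hmap U⟩ : Fin (m+1)))
    (fun U : G => finrank (ZMod 2) U = j) (fun k => κ ≤ (k : ℕ))]
  apply Finset.sum_congr rfl
  intro k _
  congr 1
  rw [numSum, ncard_eq_filter]
  apply congrArg
  apply Finset.filter_congr
  intro U _
  simp [Fin.ext_iff]

lemma sum_numInter (W : G) (j : ℕ) :
    ∑ k : Fin (m+1), numInter m j (k : ℕ) W = numDim m j := by
  have h := numInter_tail_sum W j 0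
  simp only [Nat.zero_le, if_true, true_and, and_true] at h
  rw [h, numDim]

lemma sum_numSum (W : G) (j : ℕ) :
    ∑ k : Fin (m+1), numSum m j (k : ℕ) W = numDim m j := by
  have h := numSum_tail_sum W j 0
  simp only [Nat.zero_le, if_true, true_and, and_true] at h
  rw [h, numDim]

lemma numInter_tail_mono {W W' : G} (hWW' : W ≤ W') (j κ : ℕ) :
    ∑ k : Fin (m+1), (if κ ≤ (k : ℕ) then numInter m j (k : ℕ) W else 0)
      ≤ ∑ k : Fin (m+1), (if κ ≤ (k : ℕ) then numInter m j (k : ℕ) W' else 0) := by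
  rw [numInter_tail_sum, numInter_tail_sum]
  apply Set.ncard_le_ncard _ (Set.toFinite _)
  rintro U ⟨h1, h2⟩
  exact ⟨h1, le_trans h2 (Submodule.finrank_mono (inf_le_inf_left U hWW'))⟩

lemma numSum_tail_mono {W W' : G} (hWW' : W ≤ W') (j κ : ℕ) :
    ∑ k : Fin (m+1), (if κ ≤ (k : ℕ) then numSum m j (k : ℕ) W else 0)
      ≤ ∑ k : Fin (m+1), (if κ ≤ (k : ℕ) then numSum m j (k : ℕ) W' else 0) := by
  rw [numSum_tail_sum, numSum_tail_sum]
  apply Set.ncard_le_ncard _ (Set.toFinite _)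
  rintro U ⟨h1, h2⟩
  exact ⟨h1, le_trans h2 (Submodule.finrank_mono (sup_le_sup_left hWW' U))⟩

lemma numDim_pos {j : ℕ} (hj : j ≤ m) : 0 < numDim m j := by
  rw [numDim, Set.ncard_pos (Set.toFinite _)]
  exact ⟨stdW m j, finrank_stdW hj⟩

end Comb2

section Comb3
variable {m : ℕ}
local notation "G" => Submodule (ZMod 2) (Fin m → ZMod 2)

lemma pair_swap_count (c : G → G → ℕ) (hcomm : ∀ U W, c U W = c W U)
    (N : ℕ → ℕ → G → ℕ)
    (hN : ∀ j k (W : G), N j k W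
      = Set.ncard {U : G | finrank (ZMod 2) U = j ∧ c U W = k})
    (hcongr : ∀ j k (W W' : G), finrank (ZMod 2) W = finrank (ZMod 2) W' →
      N j k W = N j k W')
    (i j k : ℕ) (hi : i ≤ m) (hj : j ≤ m) :
    N j k (stdW m i) * numDim m i = N i k (stdW m j) * numDim m j := by
  classical
  have key : ∀ a b : ℕ, a ≤ m →
      (Finset.univ.filter fun p : G × G =>
        finrank (ZMod 2) p.1 = b ∧ finrank (ZMod 2) p.2 = a ∧ c p.1 p.2 = k).card
      = N b k (stdW m a) * numDim m a := by
    intro a b ha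
    rw [Finset.card_eq_sum_card_fiberwise (f := Prod.snd) (t := Finset.univ)
      (fun x _ => Finset.mem_univ _)]
    have step : ∀ w : G,
        ((Finset.univ.filter fun p : G × G =>
          finrank (ZMod 2) p.1 = b ∧ finrank (ZMod 2) p.2 = a ∧ c p.1 p.2 = k).filter
            fun p => p.2 = w).card
        = if finrank (ZMod 2) w = a then
            (Finset.univ.filter fun U : G => finrank (ZMod 2) U = b ∧ c U w = k).card
          else 0 := by
      intro w
      by_cases hw : finrank (ZMod 2) w = a
      · rw [if_pos hw]
        refine Finset.card_bij' (fun p _ => p.1) (fun U _ => (U, w)) ?_ ?_ ?_ ?_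
        · intro p hp
          simp only [Finset.mem_filter, Finset.mem_univ, true_and] at hp ⊢
          obtain ⟨⟨h1, _, h3⟩, h4⟩ := hp
          exact ⟨h1, by rw [← h4]; exact h3⟩
        · intro U hU
          simp only [Finset.mem_filter, Finset.mem_univ, true_and] at hU
          exact Finset.mem_filter.mpr ⟨Finset.mem_filter.mpr
            ⟨Finset.mem_univ _, hU.1, hw, hU.2⟩, rfl⟩
        · intro p hp
          have h2 := (Finset.mem_filter.mp hp).2
          exact Prod.ext rfl h2.symm
        · intro U _
          rfl
      · rw [if_neg hw, Finset.card_eq_zero, Finset.filter_eq_empty_iff]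
        intro p hmem
        simp only [Finset.mem_filter, Finset.mem_univ, true_and] at hmem
        intro hpw
        exact hw (by rw [← hpw]; exact hmem.2.1)
    rw [Finset.sum_congr rfl (fun w _ => step w), ← Finset.sum_filter]
    have hval : ∀ w ∈ Finset.univ.filter (fun w : G => finrank (ZMod 2) w = a),
        (Finset.univ.filter fun U : G => finrank (ZMod 2) U = b ∧ c U w = k).card
          = N b k (stdW m a) := by
      intro w hw
      simp only [Finset.mem_filter] at hw
      rw [← ncard_eq_filter, ← hN, hcongr b k w (stdW m a) (by rw [hw.2, finrank_stdW ha])]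
    rw [Finset.sum_congr rfl hval, Finset.sum_const, smul_eq_mul, mul_comm]
    congr 1
    rw [numDim, ncard_eq_filter]
  have swap_eq :
      (Finset.univ.filter fun p : G × G =>
        finrank (ZMod 2) p.1 = j ∧ finrank (ZMod 2) p.2 = i ∧ c p.1 p.2 = k).card
      = (Finset.univ.filter fun p : G × G =>
        finrank (ZMod 2) p.1 = i ∧ finrank (ZMod 2) p.2 = j ∧ c p.1 p.2 = k).card := by
    refine Finset.card_bij' (fun p _ => (p.2, p.1)) (fun p _ => (p.2, p.1)) ?_ ?_ ?_ ?_
    · intro p hp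
      simp only [Finset.mem_filter, Finset.mem_univ, true_and] at hp ⊢
      exact ⟨hp.2.1, hp.1, by rw [hcomm]; exact hp.2.2⟩
    · intro p hp
      simp only [Finset.mem_filter, Finset.mem_univ, true_and] at hp ⊢
      exact ⟨hp.2.1, hp.1, by rw [hcomm]; exact hp.2.2⟩
    · intro p _; rfl
    · intro p _; rfl
  rw [← key i j hi, ← key j i hj, swap_eq]

theorem numInter_swap (i j k : ℕ) (hi : i ≤ m) (hj : j ≤ m) :
    numInter m j k (stdW m i) * numDim m i = numInter m i k (stdW m j) * numDim m j := by
  apply pair_swap_count (fun U W => finrank (ZMod 2) ↥(U ⊓ W)) (fun U W => by rw [inf_comm])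
    (fun j k W => numInter m j k W) (fun j k W => rfl)
    (fun j k W W' h => numInter_congr h) i j k hi hj

theorem numSum_swap (i j k : ℕ) (hi : i ≤ m) (hj : j ≤ m) :
    numSum m j k (stdW m i) * numDim m i = numSum m i k (stdW m j) * numDim m j := by
  apply pair_swap_count (fun U W => finrank (ZMod 2) ↥(U ⊔ W)) (fun U W => by rw [sup_comm])
    (fun j k W => numSum m j k W) (fun j k W => rfl)
    (fun j k W W' h => numSum_congr h) i j k hi hj

end Comb3

section Prob
variable {m : ℕ}

/-- tail sums -/
def tailSum (m : ℕ) (a : Fin (m+1) → ℝ) (κ : ℕ) : ℝ :=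
  ∑ k : Fin (m+1), if κ ≤ (k : ℕ) then a k else 0

/-- tail V-probability -/
def TV (m i j κ : ℕ) : ℝ :=
  ∑ k : Fin (m+1), if κ ≤ (k : ℕ) then Vprob m i j (k : ℕ) else 0
def TCp (m i j κ : ℕ) : ℝ :=
  ∑ k : Fin (m+1), if κ ≤ (k : ℕ) then Cprob m i j (k : ℕ) else 0

lemma Vprob_nonneg (i j k : ℕ) : 0 ≤ Vprob m i j k :=
  div_nonneg (Nat.cast_nonneg _) (Nat.cast_nonneg _)
lemma Cprob_nonneg (i j k : ℕ) : 0 ≤ Cprob m i j k :=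
  div_nonneg (Nat.cast_nonneg _) (Nat.cast_nonneg _)

lemma numDim_cast_pos {j : ℕ} (hj : j ≤ m) : (0:ℝ) < (numDim m j : ℝ) := by
  exact_mod_cast numDim_pos hj

lemma TV_eq (i j κ : ℕ) :
    TV m i j κ = ((∑ k : Fin (m+1), if κ ≤ (k : ℕ) then numInter m j (k : ℕ) (stdW m i) else 0 : ℕ) : ℝ)
      / (numDim m j : ℝ) := by
  rw [TV]
  push_cast
  rw [Finset.sum_div]
  apply Finset.sum_congr rfl
  intro k _
  split <;> simp [Vprob]

lemma TCp_eq (i j κ : ℕ) :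
    TCp m i j κ = ((∑ k : Fin (m+1), if κ ≤ (k : ℕ) then numSum m j (k : ℕ) (stdW m i) else 0 : ℕ) : ℝ)
      / (numDim m j : ℝ) := by
  rw [TCp]
  push_cast
  rw [Finset.sum_div]
  apply Finset.sum_congr rfl
  intro k _
  split <;> simp [Cprob]

lemma TV_mono_left {i i' : ℕ} (h : i ≤ i') (j κ : ℕ) (hj : j ≤ m) :
    TV m i j κ ≤ TV m i' j κ := by
  rw [TV_eq, TV_eq]
  apply div_le_div_of_nonneg_right _ (numDim_cast_pos hj).le
  exact_mod_cast numInter_tail_mono (stdW_mono h) j κ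

lemma TCp_mono_left {i i' : ℕ} (h : i ≤ i') (j κ : ℕ) (hj : j ≤ m) :
    TCp m i j κ ≤ TCp m i' j κ := by
  rw [TCp_eq, TCp_eq]
  apply div_le_div_of_nonneg_right _ (numDim_cast_pos hj).le
  exact_mod_cast numSum_tail_mono (stdW_mono h) j κ

lemma Vprob_symm {i j : ℕ} (hi : i ≤ m) (hj : j ≤ m) (k : ℕ) :
    Vprob m i j k = Vprob m j i k := by
  rw [Vprob, Vprob, div_eq_div_iff (numDim_cast_pos hj).ne' (numDim_cast_pos hi).ne']
  exact_mod_cast numInter_swap i j k hi hj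

lemma Cprob_symm {i j : ℕ} (hi : i ≤ m) (hj : j ≤ m) (k : ℕ) :
    Cprob m i j k = Cprob m j i k := by
  rw [Cprob, Cprob, div_eq_div_iff (numDim_cast_pos hj).ne' (numDim_cast_pos hi).ne']
  exact_mod_cast numSum_swap i j k hi hj

lemma TV_mono_right {j : ℕ} (i : ℕ) (hi : i ≤ m) (hj : j < m) (κ : ℕ) :
    TV m i j κ ≤ TV m i (j+1) κ := by
  have e1 : TV m i j κ = TV m j i κ := by
    apply Finset.sum_congr rfl; intro k _
    rw [Vprob_symm hi (le_of_lt hj)]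
  have e2 : TV m i (j+1) κ = TV m (j+1) i κ := by
    apply Finset.sum_congr rfl; intro k _
    rw [Vprob_symm hi hj]
  rw [e1, e2]
  exact TV_mono_left (Nat.le_succ j) i κ hi

lemma TCp_mono_right {j : ℕ} (i : ℕ) (hi : i ≤ m) (hj : j < m) (κ : ℕ) :
    TCp m i j κ ≤ TCp m i (j+1) κ := by
  have e1 : TCp m i j κ = TCp m j i κ := by
    apply Finset.sum_congr rfl; intro k _
    rw [Cprob_symm hi (le_of_lt hj)]
  have e2 : TCp m i (j+1) κ = TCp m (j+1) i κ := by
    apply Finset.sum_congr rfl; intro k _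
    rw [Cprob_symm hi hj]
  rw [e1, e2]
  exact TCp_mono_left (Nat.le_succ j) i κ hi

lemma Vprob_sum_one {i j : ℕ} (hj : j ≤ m) :
    ∑ k : Fin (m+1), Vprob m i j (k : ℕ) = 1 := by
  simp only [Vprob]
  rw [← Finset.sum_div, ← Nat.cast_sum, sum_numInter]
  exact div_self (ne_of_gt (numDim_cast_pos hj))

lemma Cprob_sum_one {i j : ℕ} (hj : j ≤ m) :
    ∑ k : Fin (m+1), Cprob m i j (k : ℕ) = 1 := by
  simp only [Cprob]
  rw [← Finset.sum_div, ← Nat.cast_sum, sum_numSum]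
  exact div_self (ne_of_gt (numDim_cast_pos hj))

end Prob

section Abel
variable {m : ℕ}

lemma tailSum_of_gt (a : Fin (m+1) → ℝ) {κ : ℕ} (h : m < κ) : tailSum m a κ = 0 := by
  apply Finset.sum_eq_zero
  intro k _
  rw [if_neg]
  have : (k : ℕ) ≤ m := by omega
  omega

lemma abel_key (w : Fin (m+1) → ℝ) (c : ℕ → ℝ) :
    ∑ j : Fin (m+1), w j * c (j : ℕ)
      = c 0 * (∑ j : Fin (m+1), w j)
        + ∑ l ∈ Finset.range (m+1), (c (l+1) - c l) * tailSum m w (l+1) := by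
  have inner : ∀ k : Fin (m+1),
      ∑ l ∈ Finset.range (m+1), (if l + 1 ≤ (k : ℕ) then (c (l+1) - c l) * w k else 0)
        = (c (k : ℕ) - c 0) * w k := by
    intro k
    rw [← Finset.sum_filter]
    have hf : (Finset.range (m+1)).filter (fun l => l + 1 ≤ (k : ℕ)) = Finset.range (k : ℕ) := by
      ext l
      simp only [Finset.mem_filter, Finset.mem_range]
      have := k.isLt
      omega
    rw [hf, ← Finset.sum_mul, Finset.sum_range_sub (fun l => c l)]
  have expand : ∑ l ∈ Finset.range (m+1), (c (l+1) - c l) * tailSum m w (l+1)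
      = ∑ k : Fin (m+1), (c (k : ℕ) - c 0) * w k := by
    simp only [tailSum, Finset.mul_sum]
    rw [Finset.sum_comm]
    apply Finset.sum_congr rfl
    intro k _
    rw [← inner k]
    apply Finset.sum_congr rfl
    intro l _
    split <;> ring_nf <;> simp
  rw [expand, Finset.mul_sum, ← Finset.sum_add_distrib]
  apply Finset.sum_congr rfl
  intro k _
  ring

lemma abel_le (u v : Fin (m+1) → ℝ) (c : ℕ → ℝ)
    (hsum : ∑ j : Fin (m+1), u j = ∑ j : Fin (m+1), v j)
    (htail : ∀ κ : ℕ, tailSum m u κ ≤ tailSum m v κ)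
    (hc : ∀ l, l < m → c l ≤ c (l+1)) :
    ∑ j : Fin (m+1), u j * c (j : ℕ) ≤ ∑ j : Fin (m+1), v j * c (j : ℕ) := by
  rw [abel_key u c, abel_key v c, hsum]
  apply add_le_add_right
  apply Finset.sum_le_sum
  intro l hl
  rcases lt_or_ge l m with hlm | hlm
  · apply mul_le_mul_of_nonneg_left (htail (l+1)) (sub_nonneg.mpr (hc l hlm))
  · have hl' : l = m := by simp only [Finset.mem_range] at hl; omega
    rw [hl', tailSum_of_gt u (by omega), tailSum_of_gt v (by omega)]

end Abel

section Box
variable {m : ℕ}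

lemma tailSum_boxdot (a b : Fin (m+1) → ℝ) (κ : ℕ) :
    tailSum m (boxdot m a b) κ
      = ∑ i : Fin (m+1), a i * (∑ j : Fin (m+1), b j * TV m (i : ℕ) (j : ℕ) κ) := by
  rw [tailSum]
  have step1 : ∀ k : Fin (m+1), (if κ ≤ (k:ℕ) then boxdot m a b k else 0)
      = ∑ i : Fin (m+1), ∑ j : Fin (m+1),
          (if κ ≤ (k:ℕ) then Vprob m (i:ℕ) (j:ℕ) (k:ℕ) * a i * b j else 0) := by
    intro k
    split
    · rfl
    · simp
  rw [Finset.sum_congr rfl (fun k _ => step1 k), Finset.sum_comm]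
  apply Finset.sum_congr rfl
  intro i _
  rw [Finset.sum_comm, Finset.mul_sum]
  apply Finset.sum_congr rfl
  intro j _
  rw [TV, Finset.mul_sum, Finset.mul_sum]
  apply Finset.sum_congr rfl
  intro k _
  split <;> ring

lemma tailSum_boxtimes (a b : Fin (m+1) → ℝ) (κ : ℕ) :
    tailSum m (boxtimes m a b) κ
      = ∑ i : Fin (m+1), a i * (∑ j : Fin (m+1), b j * TCp m (i : ℕ) (j : ℕ) κ) := by
  rw [tailSum]
  have step1 : ∀ k : Fin (m+1), (if κ ≤ (k:ℕ) then boxtimes m a b k else 0)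
      = ∑ i : Fin (m+1), ∑ j : Fin (m+1),
          (if κ ≤ (k:ℕ) then Cprob m (i:ℕ) (j:ℕ) (k:ℕ) * a i * b j else 0) := by
    intro k
    split
    · rfl
    · simp
  rw [Finset.sum_congr rfl (fun k _ => step1 k), Finset.sum_comm]
  apply Finset.sum_congr rfl
  intro i _
  rw [Finset.sum_comm, Finset.mul_sum]
  apply Finset.sum_congr rfl
  intro j _
  rw [TCp, Finset.mul_sum, Finset.mul_sum]
  apply Finset.sum_congr rfl
  intro k _
  split <;> ring

lemma boxdot_nonneg {a b : Fin (m+1) → ℝ} (ha : ∀ i, 0 ≤ a i) (hb : ∀ j, 0 ≤ b j) :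
    ∀ k, 0 ≤ boxdot m a b k := by
  intro k
  apply Finset.sum_nonneg; intro i _
  apply Finset.sum_nonneg; intro j _
  exact mul_nonneg (mul_nonneg (Vprob_nonneg (i:ℕ) (j:ℕ) (k:ℕ)) (ha i)) (hb j)

lemma boxtimes_nonneg {a b : Fin (m+1) → ℝ} (ha : ∀ i, 0 ≤ a i) (hb : ∀ j, 0 ≤ b j) :
    ∀ k, 0 ≤ boxtimes m a b k := by
  intro k
  apply Finset.sum_nonneg; intro i _
  apply Finset.sum_nonneg; intro j _
  exact mul_nonneg (mul_nonneg (Cprob_nonneg (i:ℕ) (j:ℕ) (k:ℕ)) (ha i)) (hb j)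

lemma boxdot_sum_one {a b : Fin (m+1) → ℝ} (ha : ∑ i : Fin (m+1), a i = 1)
    (hb : ∑ j : Fin (m+1), b j = 1) :
    ∑ k : Fin (m+1), boxdot m a b k = 1 := by
  simp only [boxdot]
  rw [Finset.sum_comm]
  have : ∀ i : Fin (m+1), ∑ k : Fin (m+1), ∑ j : Fin (m+1), Vprob m (i:ℕ) (j:ℕ) (k:ℕ) * a i * b j
      = a i := by
    intro i
    rw [Finset.sum_comm]
    have : ∀ j : Fin (m+1), ∑ k : Fin (m+1), Vprob m (i:ℕ) (j:ℕ) (k:ℕ) * a i * b j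
        = a i * b j := by
      intro j
      have h1 : ∑ k : Fin (m+1), Vprob m (i:ℕ) (j:ℕ) (k:ℕ) * a i * b j
          = (∑ k : Fin (m+1), Vprob m (i:ℕ) (j:ℕ) (k:ℕ)) * (a i * b j) := by
        rw [Finset.sum_mul]
        apply Finset.sum_congr rfl
        intro k _
        ring
      rw [h1, Vprob_sum_one (by omega), one_mul]
    rw [Finset.sum_congr rfl (fun j _ => this j), ← Finset.mul_sum, hb, mul_one]
  rw [Finset.sum_congr rfl (fun i _ => this i), ha]

lemma boxtimes_sum_one {a b : Fin (m+1) → ℝ} (ha : ∑ i : Fin (m+1), a i = 1)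
    (hb : ∑ j : Fin (m+1), b j = 1) :
    ∑ k : Fin (m+1), boxtimes m a b k = 1 := by
  simp only [boxtimes]
  rw [Finset.sum_comm]
  have : ∀ i : Fin (m+1), ∑ k : Fin (m+1), ∑ j : Fin (m+1), Cprob m (i:ℕ) (j:ℕ) (k:ℕ) * a i * b j
      = a i := by
    intro i
    rw [Finset.sum_comm]
    have : ∀ j : Fin (m+1), ∑ k : Fin (m+1), Cprob m (i:ℕ) (j:ℕ) (k:ℕ) * a i * b j
        = a i * b j := by
      intro j
      have h1 : ∑ k : Fin (m+1), Cprob m (i:ℕ) (j:ℕ) (k:ℕ) * a i * b j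
          = (∑ k : Fin (m+1), Cprob m (i:ℕ) (j:ℕ) (k:ℕ)) * (a i * b j) := by
        rw [Finset.sum_mul]
        apply Finset.sum_congr rfl
        intro k _
        ring
      rw [h1, Cprob_sum_one (by omega), one_mul]
    rw [Finset.sum_congr rfl (fun j _ => this j), ← Finset.mul_sum, hb, mul_one]
  rw [Finset.sum_congr rfl (fun i _ => this i), ha]

lemma boxdot_tail_le {a a' b b' : Fin (m+1) → ℝ}
    (ha0 : ∀ i, 0 ≤ a i) (hb'0 : ∀ j, 0 ≤ b' j)
    (hasum : ∑ i : Fin (m+1), a i = 1) (ha'sum : ∑ i : Fin (m+1), a' i = 1)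
    (hbsum : ∑ j : Fin (m+1), b j = 1) (hb'sum : ∑ j : Fin (m+1), b' j = 1)
    (hatail : ∀ κ : ℕ, tailSum m a κ ≤ tailSum m a' κ)
    (hbtail : ∀ κ : ℕ, tailSum m b κ ≤ tailSum m b' κ) (κ : ℕ) :
    tailSum m (boxdot m a b) κ ≤ tailSum m (boxdot m a' b') κ := by
  rw [tailSum_boxdot, tailSum_boxdot]
  calc ∑ i : Fin (m+1), a i * (∑ j : Fin (m+1), b j * TV m (i:ℕ) (j:ℕ) κ)
      ≤ ∑ i : Fin (m+1), a i * (∑ j : Fin (m+1), b' j * TV m (i:ℕ) (j:ℕ) κ) := by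
        apply Finset.sum_le_sum
        intro i _
        apply mul_le_mul_of_nonneg_left _ (ha0 i)
        apply abel_le b b' (fun l => TV m (i:ℕ) l κ) (hbsum.trans hb'sum.symm) hbtail
        intro l hl
        exact TV_mono_right (i:ℕ) (by omega) hl κ
    _ ≤ ∑ i : Fin (m+1), a' i * (∑ j : Fin (m+1), b' j * TV m (i:ℕ) (j:ℕ) κ) := by
        apply abel_le a a' (fun l => ∑ j : Fin (m+1), b' j * TV m l (j:ℕ) κ)
          (hasum.trans ha'sum.symm) hatail
        intro l _
        apply Finset.sum_le_sum
        intro j _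
        exact mul_le_mul_of_nonneg_left (TV_mono_left (Nat.le_succ l) (j:ℕ) κ (by omega)) (hb'0 j)

lemma boxtimes_tail_le {a a' b b' : Fin (m+1) → ℝ}
    (ha0 : ∀ i, 0 ≤ a i) (hb'0 : ∀ j, 0 ≤ b' j)
    (hasum : ∑ i : Fin (m+1), a i = 1) (ha'sum : ∑ i : Fin (m+1), a' i = 1)
    (hbsum : ∑ j : Fin (m+1), b j = 1) (hb'sum : ∑ j : Fin (m+1), b' j = 1)
    (hatail : ∀ κ : ℕ, tailSum m a κ ≤ tailSum m a' κ)
    (hbtail : ∀ κ : ℕ, tailSum m b κ ≤ tailSum m b' κ) (κ : ℕ) :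
    tailSum m (boxtimes m a b) κ ≤ tailSum m (boxtimes m a' b') κ := by
  rw [tailSum_boxtimes, tailSum_boxtimes]
  calc ∑ i : Fin (m+1), a i * (∑ j : Fin (m+1), b j * TCp m (i:ℕ) (j:ℕ) κ)
      ≤ ∑ i : Fin (m+1), a i * (∑ j : Fin (m+1), b' j * TCp m (i:ℕ) (j:ℕ) κ) := by
        apply Finset.sum_le_sum
        intro i _
        apply mul_le_mul_of_nonneg_left _ (ha0 i)
        apply abel_le b b' (fun l => TCp m (i:ℕ) l κ) (hbsum.trans hb'sum.symm) hbtail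
        intro l hl
        exact TCp_mono_right (i:ℕ) (by omega) hl κ
    _ ≤ ∑ i : Fin (m+1), a' i * (∑ j : Fin (m+1), b' j * TCp m (i:ℕ) (j:ℕ) κ) := by
        apply abel_le a a' (fun l => ∑ j : Fin (m+1), b' j * TCp m l (j:ℕ) κ)
          (hasum.trans ha'sum.symm) hatail
        intro l _
        apply Finset.sum_le_sum
        intro j _
        exact mul_le_mul_of_nonneg_left (TCp_mono_left (Nat.le_succ l) (j:ℕ) κ (by omega)) (hb'0 j)

end Box

section Pow
variable {m : ℕ}

lemma boxdotPow_good (n : ℕ) {a a' : Fin (m+1) → ℝ}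
    (ha0 : ∀ i, 0 ≤ a i) (ha'0 : ∀ i, 0 ≤ a' i)
    (hasum : ∑ i : Fin (m+1), a i = 1) (ha'sum : ∑ i : Fin (m+1), a' i = 1)
    (hatail : ∀ κ : ℕ, tailSum m a κ ≤ tailSum m a' κ) :
    (∀ k, 0 ≤ boxdotPow m n a k) ∧ (∑ k : Fin (m+1), boxdotPow m n a k = 1)
    ∧ (∀ k, 0 ≤ boxdotPow m n a' k) ∧ (∑ k : Fin (m+1), boxdotPow m n a' k = 1)
    ∧ (∀ κ : ℕ, tailSum m (boxdotPow m n a) κ ≤ tailSum m (boxdotPow m n a') κ) := by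
  induction n with
  | zero => exact ⟨ha0, hasum, ha'0, ha'sum, hatail⟩
  | succ n ih =>
    obtain ⟨h1, h2, h3, h4, h5⟩ := ih
    refine ⟨boxdot_nonneg ha0 h1, boxdot_sum_one hasum h2,
      boxdot_nonneg ha'0 h3, boxdot_sum_one ha'sum h4, ?_⟩
    intro κ
    exact boxdot_tail_le ha0 h3 hasum ha'sum h2 h4 hatail h5 κ

lemma boxtimesPow_good (n : ℕ) {a a' : Fin (m+1) → ℝ}
    (ha0 : ∀ i, 0 ≤ a i) (ha'0 : ∀ i, 0 ≤ a' i)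
    (hasum : ∑ i : Fin (m+1), a i = 1) (ha'sum : ∑ i : Fin (m+1), a' i = 1)
    (hatail : ∀ κ : ℕ, tailSum m a κ ≤ tailSum m a' κ) :
    (∀ k, 0 ≤ boxtimesPow m n a k) ∧ (∑ k : Fin (m+1), boxtimesPow m n a k = 1)
    ∧ (∀ k, 0 ≤ boxtimesPow m n a' k) ∧ (∑ k : Fin (m+1), boxtimesPow m n a' k = 1)
    ∧ (∀ κ : ℕ, tailSum m (boxtimesPow m n a) κ ≤ tailSum m (boxtimesPow m n a') κ) := by
  induction n with
  | zero => exact ⟨ha0, hasum, ha'0, ha'sum, hatail⟩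
  | succ n ih =>
    obtain ⟨h1, h2, h3, h4, h5⟩ := ih
    refine ⟨boxtimes_nonneg ha0 h1, boxtimes_sum_one hasum h2,
      boxtimes_nonneg ha'0 h3, boxtimes_sum_one ha'sum h4, ?_⟩
    intro κ
    exact boxtimes_tail_le ha0 h3 hasum ha'sum h2 h4 hatail h5 κ

end Pow

section Tilde
variable {m : ℕ}

lemma extSeq_step {x : Fin m → ℝ}
    (hx0 : ∀ i, 0 ≤ x i) (hx1 : ∀ i, x i ≤ 1)
    (hxmono : ∀ i j : Fin m, i ≤ j → x j ≤ x i) :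
    ∀ κ : ℕ, κ ≤ m → extSeq m x (κ + 1) ≤ extSeq m x κ := by
  intro κ hκ
  rcases Nat.eq_zero_or_pos κ with h0 | hpos
  · subst h0
    show extSeq m x 1 ≤ extSeq m x 0
    rw [extSeq, extSeq]
    simp only [dif_pos rfl]
    rw [dif_neg (by omega : ¬ (1:ℕ) = 0)]
    by_cases h : 1 ≤ m
    · rw [dif_pos h]
      exact hx1 _
    · rw [dif_neg h]
      norm_num
  · simp only [extSeq, dif_neg (by omega : ¬ κ + 1 = 0), dif_neg (by omega : ¬ κ = 0),
      dif_pos hκ]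
    by_cases h : κ + 1 ≤ m
    · rw [dif_pos h]
      exact hxmono _ _ (by simp only [Fin.le_def]; omega)
    · rw [dif_neg h]
      exact hx0 _

lemma tilde_nonneg {x : Fin m → ℝ}
    (hx0 : ∀ i, 0 ≤ x i) (hx1 : ∀ i, x i ≤ 1)
    (hxmono : ∀ i j : Fin m, i ≤ j → x j ≤ x i) :
    ∀ k, 0 ≤ tilde m x k := by
  intro k
  rw [tilde, sub_nonneg]
  exact extSeq_step hx0 hx1 hxmono (k : ℕ) (by omega)

lemma tailSum_tilde (x : Fin m → ℝ) (κ : ℕ) :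
    tailSum m (tilde m x) κ = extSeq m x κ := by
  rw [tailSum]
  have hsplit : ∀ k : Fin (m+1), (if κ ≤ (k:ℕ) then tilde m x k else 0)
      = (if κ ≤ (k:ℕ) then extSeq m x (k:ℕ) - extSeq m x ((k:ℕ)+1) else 0) := by
    intro k; rfl
  rw [Finset.sum_congr rfl (fun k _ => hsplit k), Fin.sum_univ_eq_sum_range
    (fun k => if κ ≤ k then extSeq m x k - extSeq m x (k+1) else 0), ← Finset.sum_filter]
  by_cases hκ : κ ≤ m + 1
  · have hf : (Finset.range (m+1)).filter (fun k => κ ≤ k) = Finset.Ico κ (m+1) := by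
      ext l
      simp only [Finset.mem_filter, Finset.mem_range, Finset.mem_Ico]
      omega
    rw [hf, Finset.sum_Ico_eq_sum_range]
    have : ∀ i ∈ Finset.range (m + 1 - κ),
        extSeq m x (κ + i) - extSeq m x (κ + i + 1)
          = (fun t => extSeq m x (κ + t)) i - (fun t => extSeq m x (κ + t)) (i+1) := by
      intro i _
      simp only []
      ring_nf
    rw [Finset.sum_congr rfl this, Finset.sum_range_sub' (fun t => extSeq m x (κ + t))]
    simp only [Nat.add_zero]
    have hend : extSeq m x (κ + (m + 1 - κ)) = if κ = m + 1 then extSeq m x κ else 0 := by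
      split
      · congr 1; omega
      · have : κ + (m + 1 - κ) = m + 1 := by omega
        rw [this, extSeq]
        simp only [dif_neg (by omega : ¬ m + 1 = 0)]
        rw [dif_neg (by omega : ¬ m + 1 ≤ m)]
    rw [hend]
    split
    · rename_i hc
      have hz : extSeq m x κ = 0 := by
        rw [extSeq, dif_neg (by omega : ¬ κ = 0), dif_neg (by omega : ¬ κ ≤ m)]
      rw [hz]
      ring
    · ring
  · have hf : (Finset.range (m+1)).filter (fun k => κ ≤ k) = ∅ := by
      apply Finset.filter_eq_empty_iff.mpr
      intro l hl
      simp only [Finset.mem_range] at hl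
      omega
    rw [hf, Finset.sum_empty, extSeq]
    rw [dif_neg (by omega : ¬ κ = 0), dif_neg (by omega : ¬ κ ≤ m)]

lemma tilde_sum_one (x : Fin m → ℝ) : ∑ k : Fin (m+1), tilde m x k = 1 := by
  have := tailSum_tilde x 0
  rw [tailSum] at this
  simp only [Nat.zero_le, if_true] at this
  rw [this, extSeq]
  simp

lemma extSeq_le {x x' : Fin m → ℝ} (hle : ∀ i, x i ≤ x' i) (κ : ℕ) :
    extSeq m x κ ≤ extSeq m x' κ := by
  rw [extSeq, extSeq]
  split
  · exact le_refl _
  · split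
    · exact hle _
    · exact le_refl _

end Tilde

section Final
variable {m : ℕ}

lemma pcirc_nonneg {ε : ℝ} (hε : ε ∈ Set.Icc (0:ℝ) 1) : ∀ i, 0 ≤ pcirc m ε i := by
  intro i
  obtain ⟨h0, h1⟩ := hε
  have h2 : (0:ℝ) ≤ 1 - ε := by linarith
  rw [pcirc]
  positivity

lemma pcirc_sum (ε : ℝ) : ∑ i : Fin (m+1), pcirc m ε i = 1 := by
  have key : ∑ i : Fin (m+1), pcirc m ε i = (ε + (1 - ε))^m := by
    rw [add_pow]
    simp only [pcirc]
    rw [Fin.sum_univ_eq_sum_range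
      (fun i => (m.choose i : ℝ) * ε ^ i * (1 - ε) ^ (m - i))]
    apply Finset.sum_congr rfl
    intro k _
    ring
  rw [key]
  norm_num
end Final

/-- **Theorem 1.** The functions `f(·; ε)` and `g` are increasing in `x` on
the set of CCDF vectors. -/
theorem f_g_increasing (m dv dc : ℕ) (hm : 1 ≤ m) (hdv : 2 ≤ dv) (hdc : 2 ≤ dc)
    (ε : ℝ) (hε : ε ∈ Set.Icc (0:ℝ) 1)
    (x x' : Fin m → ℝ)
    (hx0 : ∀ i, 0 ≤ x i) (hx1 : ∀ i, x i ≤ 1)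
    (hxmono : ∀ i j : Fin m, i ≤ j → x j ≤ x i)
    (hx'0 : ∀ i, 0 ≤ x' i) (hx'1 : ∀ i, x' i ≤ 1)
    (hx'mono : ∀ i j : Fin m, i ≤ j → x' j ≤ x' i)
    (hle : ∀ i, x i ≤ x' i) :
    (∀ i, fFun m dv ε x i ≤ fFun m dv ε x' i) ∧
    (∀ i, gFun m dc x i ≤ gFun m dc x' i) := by
  have ha0 := tilde_nonneg hx0 hx1 hxmono
  have ha'0 := tilde_nonneg hx'0 hx'1 hx'mono
  have hasum := tilde_sum_one x
  have ha'sum := tilde_sum_one x'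
  have hatail : ∀ κ : ℕ, tailSum m (tilde m x) κ ≤ tailSum m (tilde m x') κ := by
    intro κ
    rw [tailSum_tilde, tailSum_tilde]
    exact extSeq_le hle κ
  constructor
  · obtain ⟨h1, h2, h3, h4, h5⟩ := boxdotPow_good (dv - 2) ha0 ha'0 hasum ha'sum hatail
    intro i
    show tailSum m (fcirc m dv ε (tilde m x)) ((i : ℕ) + 1)
      ≤ tailSum m (fcirc m dv ε (tilde m x')) ((i : ℕ) + 1)
    rw [fcirc, fcirc]
    exact boxdot_tail_le (pcirc_nonneg hε) h3 (pcirc_sum ε) (pcirc_sum ε) h2 h4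
      (fun κ => le_refl _) h5 _
  · obtain ⟨h1, h2, h3, h4, h5⟩ := boxtimesPow_good (dc - 2) ha0 ha'0 hasum ha'sum hatail
    intro i
    exact h5 ((i : ℕ) + 1)


end
end

section
/- (Theorem 2: existence of F and G.) Regard f_1(·; ε),…,f_m(·; ε) and g_1,…,g_m as real multivariate polynomials in x = (x_1,…,x_m), and for a multi-index α = (i_1,…,i_m) ∈ ℕ^m let φ^{(j)}_α(ε) and γ^{(j)}_α denote the coefficient of x_1^{i_1}⋯x_m^{i_m} in f_j(·; ε) and g_j, respectively. Suppose there exist real numbers {d_{js} : 1 ≤ j, s ≤ m} forming a symmetric matrix D with all entries positive and nonzero determinant, and families of reals {φ_α(ε)} and {μ_α} indexed by multi-indices α ∈ ℕ^m, such that for every α and every s, t ∈ {1,…,m} with α_s ≥ 1 (resp. α_t ≥ 1): α_s φ_α(ε) = Σ_{j=1}^m d_{js} φ^{(j)}_{α − e_s}(ε) and α_t μ_α = Σ_{j=1}^m d_{jt} γ^{(j)}_{α − e_t}, where e_s is the s-th standard unit multi-index. Then there exist functions F(·; ε), G : ℝ^m → ℝ with F(0; ε) = 0, G(0) = 0, and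 gradients (as row vectors) F′(y; ε) = f(y; ε)·D and G′(x) = g(x)·D; hence the potential function U(x; ε) = g(x) D xᵀ − G(x) − F(g(x); ε) exists. -/
open scoped BigOperators

noncomputable section

section AuxLemmas
open MvPolynomial

lemma mv_hasFDerivAt {m : ℕ} (p : MvPolynomial (Fin m) ℝ) (y : Fin m → ℝ) :
    HasFDerivAt (fun x => MvPolynomial.eval x p)
      (∑ s : Fin m, MvPolynomial.eval y (MvPolynomial.pderiv s p) •
        (ContinuousLinearMap.proj s : (Fin m → ℝ) →L[ℝ] ℝ)) y := by
  induction p using MvPolynomial.induction_on with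
  | C a =>
      simp only [eval_C, pderiv_C, map_zero, zero_smul, Finset.sum_const_zero]
      exact hasFDerivAt_const a y
  | add p q hp hq =>
      have := hp.fun_add hq
      simp only [map_add]
      refine this.congr_fderiv ?_; symm
      simp [add_smul, Finset.sum_add_distrib]
  | mul_X p i hp =>
      have hx : HasFDerivAt (fun x : Fin m → ℝ => x i)
          (ContinuousLinearMap.proj i : (Fin m → ℝ) →L[ℝ] ℝ) y :=
        (ContinuousLinearMap.proj i : (Fin m → ℝ) →L[ℝ] ℝ).hasFDerivAt
      have h2 := hp.fun_mul hx
      have h3 : (fun x => MvPolynomial.eval x (p * X i))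
          = fun x => MvPolynomial.eval x p * x i := by
        funext x; simp
      rw [h3]
      refine h2.congr_fderiv ?_; symm
      classical
      simp only [pderiv_mul, map_add, map_mul, eval_X, add_smul, Finset.sum_add_distrib]
      rw [add_comm]
      congr 1
      · rw [Finset.sum_eq_single i]
        · simp [mul_smul]
        · intro b _ hb
          simp [pderiv_X, Pi.single_eq_of_ne hb.symm]
        · simp
      · rw [Finset.smul_sum]
        congr 1
        funext s
        simp [mul_comm, mul_smul]

lemma exists_antideriv {m : ℕ} (h : Fin m → MvPolynomial (Fin m) ℝ) (c : Fin m → Fin m → ℝ)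
    (φ : (Fin m →₀ ℕ) → ℝ)
    (hφ : ∀ (α : Fin m →₀ ℕ) (s : Fin m), 1 ≤ α s →
      (α s : ℝ) * φ α = ∑ j : Fin m, c j s * MvPolynomial.coeff (α - Finsupp.single s 1) (h j)) :
    ∃ P : MvPolynomial (Fin m) ℝ, MvPolynomial.coeff 0 P = 0 ∧
      ∀ s : Fin m, MvPolynomial.pderiv s P = ∑ j : Fin m, MvPolynomial.C (c j s) * h j := by
  classical
  set S : Finset (Fin m →₀ ℕ) := Finset.univ.biUnion (fun j : Fin m => (h j).support) with hS
  set T : Finset (Fin m →₀ ℕ) :=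
    Finset.univ.biUnion (fun s : Fin m => S.image (· + Finsupp.single s 1)) with hT
  have hTmem : ∀ (β : Fin m →₀ ℕ) (s : Fin m), β ∈ S → β + Finsupp.single s 1 ∈ T := by
    intro β s hb
    simp only [hT, Finset.mem_biUnion, Finset.mem_image, Finset.mem_univ, true_and]
    exact ⟨s, β, hb, rfl⟩
  have hTpos : ∀ α ∈ T, ∃ s : Fin m, 1 ≤ α s := by
    intro α hα
    simp only [hT, Finset.mem_biUnion, Finset.mem_image, Finset.mem_univ, true_and] at hα
    obtain ⟨s, γ, _, rfl⟩ := hα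
    exact ⟨s, by simp⟩
  refine ⟨∑ α ∈ T, MvPolynomial.monomial α (φ α), ?_, ?_⟩
  · rw [MvPolynomial.coeff_sum]
    apply Finset.sum_eq_zero
    intro α hα
    rw [MvPolynomial.coeff_monomial, if_neg]
    intro h0
    obtain ⟨s, hs⟩ := hTpos α hα
    rw [h0] at hs
    simp at hs
  · intro s
    apply MvPolynomial.ext
    intro β
    rw [map_sum, MvPolynomial.coeff_sum]
    simp only [pderiv_monomial, MvPolynomial.coeff_monomial]
    have hrhs : MvPolynomial.coeff β (∑ j : Fin m, MvPolynomial.C (c j s) * h j)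
        = ∑ j : Fin m, c j s * MvPolynomial.coeff β (h j) := by
      rw [MvPolynomial.coeff_sum]
      exact Finset.sum_congr rfl fun j _ => MvPolynomial.coeff_C_mul _ _ _
    rw [hrhs]
    by_cases hmem : β + Finsupp.single s 1 ∈ T
    · rw [Finset.sum_eq_single (β + Finsupp.single s 1)]
      · have hkey := hφ (β + Finsupp.single s 1) s (by simp)
        have h1 : (β + Finsupp.single s 1) - Finsupp.single s 1 = β := by simp
        rw [h1] at hkey
        rw [if_pos h1]
        have h2 : ((β + Finsupp.single s 1 : Fin m →₀ ℕ)) s = β s + 1 := by simp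
        rw [h2, mul_comm] at hkey
        rw [h2]
        exact hkey
      · intro α hα hne
        by_cases hz : α s = 0
        · simp [hz]
        · rw [if_neg]
          intro hEq
          apply hne
          have hle : Finsupp.single s 1 ≤ α := by
            rw [Finsupp.single_le_iff]; omega
          rw [← hEq, tsub_add_cancel_of_le hle]
      · intro hnot
        exact absurd hmem hnot
    · rw [Finset.sum_eq_zero, Finset.sum_eq_zero]
      · intro j _
        have hβ : β ∉ (h j).support := by
          intro hb
          exact hmem (hTmem β s (Finset.mem_biUnion.2 ⟨j, Finset.mem_univ j, hb⟩))
        rw [MvPolynomial.notMem_support_iff] at hβ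
        rw [hβ, mul_zero]
      · intro α hα
        by_cases hz : α s = 0
        · simp [hz]
        · rw [if_neg]
          intro hEq
          apply hmem
          have hle : Finsupp.single s 1 ≤ α := by
            rw [Finsupp.single_le_iff]; omega
          rw [← hEq, tsub_add_cancel_of_le hle]
          exact hα

end AuxLemmas

/-- **Theorem 2: existence of `F` and `G`.** If the linear system relating
the coefficients of candidate antiderivatives to the polynomial coefficients of `f` and `g`
through `D` has a solution, then `F` and `G` (and hence the potential `U`) exist. -/
theorem existence_of_F_and_G (m dv dc : ℕ) (hm : 1 ≤ m) (hdv : 2 ≤ dv) (hdc : 2 ≤ dc)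
    (ε : ℝ) (hε : ε ∈ Set.Icc (0:ℝ) 1)
    (fp gp : Fin m → MvPolynomial (Fin m) ℝ)
    (hfp : ∀ (j : Fin m) (y : Fin m → ℝ), MvPolynomial.eval y (fp j) = fFun m dv ε y j)
    (hgp : ∀ (j : Fin m) (x : Fin m → ℝ), MvPolynomial.eval x (gp j) = gFun m dc x j)
    (D : Matrix (Fin m) (Fin m) ℝ) (hDsymm : D.IsSymm) (hDpos : ∀ a b, 0 < D a b)
    (hDdet : D.det ≠ 0)
    (φ μ : (Fin m →₀ ℕ) → ℝ)
    (hφ : ∀ (α : Fin m →₀ ℕ) (s : Fin m), 1 ≤ α s →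
      (α s : ℝ) * φ α = ∑ j : Fin m, D j s * MvPolynomial.coeff (α - Finsupp.single s 1) (fp j))
    (hμ : ∀ (α : Fin m →₀ ℕ) (t : Fin m), 1 ≤ α t →
      (α t : ℝ) * μ α = ∑ j : Fin m, D j t * MvPolynomial.coeff (α - Finsupp.single t 1) (gp j)) :
    ∃ F G : (Fin m → ℝ) → ℝ, F 0 = 0 ∧ G 0 = 0 ∧
      (∀ y : Fin m → ℝ,
        HasFDerivAt F (rowDeriv m (fun s => ∑ j : Fin m, fFun m dv ε y j * D j s)) y) ∧
      (∀ x : Fin m → ℝ,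
        HasFDerivAt G (rowDeriv m (fun s => ∑ j : Fin m, gFun m dc x j * D j s)) x) := by
  classical
  obtain ⟨P, hP0, hPd⟩ := exists_antideriv fp (fun j s => D j s) φ hφ
  obtain ⟨Q, hQ0, hQd⟩ := exists_antideriv gp (fun j s => D j s) μ hμ
  refine ⟨fun y => MvPolynomial.eval y P, fun x => MvPolynomial.eval x Q, ?_, ?_, ?_, ?_⟩
  · show MvPolynomial.eval 0 P = 0
    rw [MvPolynomial.eval_zero, MvPolynomial.constantCoeff_eq]
    exact hP0
  · show MvPolynomial.eval 0 Q = 0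
    rw [MvPolynomial.eval_zero, MvPolynomial.constantCoeff_eq]
    exact hQ0
  · intro y
    have key : rowDeriv m (fun s => ∑ j : Fin m, fFun m dv ε y j * D j s)
        = ∑ s : Fin m, MvPolynomial.eval y (MvPolynomial.pderiv s P) •
            (ContinuousLinearMap.proj s : (Fin m → ℝ) →L[ℝ] ℝ) := by
      unfold rowDeriv
      refine Finset.sum_congr rfl fun s _ => ?_
      rw [hPd s]
      simp only [map_sum, MvPolynomial.eval_mul, MvPolynomial.eval_C, hfp]
      congr 1
      exact Finset.sum_congr rfl fun j _ => mul_comm _ _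
    rw [key]
    exact mv_hasFDerivAt P y
  · intro x
    have key : rowDeriv m (fun s => ∑ j : Fin m, gFun m dc x j * D j s)
        = ∑ s : Fin m, MvPolynomial.eval x (MvPolynomial.pderiv s Q) •
            (ContinuousLinearMap.proj s : (Fin m → ℝ) →L[ℝ] ℝ) := by
      unfold rowDeriv
      refine Finset.sum_congr rfl fun s _ => ?_
      rw [hQd s]
      simp only [map_sum, MvPolynomial.eval_mul, MvPolynomial.eval_C, hgp]
      congr 1
      exact Finset.sum_congr rfl fun j _ => mul_comm _ _
    rw [key]
    exact mv_hasFDerivAt Q x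

end
end

section
/- (Theorem 3: necessary coefficient-set condition for diagonal D.) Let h = (h_1,…,h_m) : ℝ^m → ℝ^m be a polynomial map, and define its coefficient sets S_h^j = {α ∈ ℕ^m : the coefficient of x_1^{α_1}⋯x_m^{α_m} in h_j is nonzero}. Suppose D is a diagonal m×m matrix with strictly positive diagonal entries d_{11},…,d_{mm}, and suppose there exists a differentiable H : ℝ^m → ℝ with gradient (as a row vector) H′(x) = h(x)·D for all x ∈ ℝ^m. Then for all i, j ∈ {1,…,m} and every multi-index α ∈ S_h^i with α_j ≥ 1, the multi-index α + e_i − e_j belongs to S_h^j (where e_i denotes the i-th standard unit multi-index). -/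
open scoped BigOperators

noncomputable section

lemma rowDeriv_apply (m : ℕ) (c v : Fin m → ℝ) :
    rowDeriv m c v = ∑ s, c s * v s := by
  simp [rowDeriv, ContinuousLinearMap.sum_apply]

lemma coeff_pderiv_aux {m : ℕ} (j : Fin m) (p : MvPolynomial (Fin m) ℝ) (β : Fin m →₀ ℕ) :
    MvPolynomial.coeff β (MvPolynomial.pderiv j p)
      = ((β j : ℝ) + 1) * MvPolynomial.coeff (β + Finsupp.single j 1) p := by
  classical
  induction p using MvPolynomial.induction_on' with
  | monomial s a =>
    rw [MvPolynomial.pderiv_monomial, MvPolynomial.coeff_monomial, MvPolynomial.coeff_monomial]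
    by_cases h : s = β + Finsupp.single j 1
    · subst h
      have h1 : β + Finsupp.single j 1 - Finsupp.single j 1 = β := by
        ext t; simp [Finsupp.tsub_apply, Finsupp.single_apply]
      have h2 : ((β + Finsupp.single j 1 : Fin m →₀ ℕ)) j = β j + 1 := by simp
      simp only [h1, h2, if_pos rfl, if_true, eq_self_iff_true]
      push_cast; ring
    · rw [if_neg h]
      by_cases h2 : s - Finsupp.single j 1 = β
      · rw [if_pos h2]
        have hsj : s j = 0 := by
          by_contra hs
          apply h
          ext t
          have h2t : s t - (Finsupp.single j 1) t = β t := by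
            rw [← Finsupp.tsub_apply, h2]
          simp only [Finsupp.add_apply, Finsupp.single_apply] at h2t ⊢
          rcases eq_or_ne j t with rfl | hjt
          · rw [if_pos rfl] at h2t ⊢; omega
          · rw [if_neg hjt] at h2t ⊢; omega
        simp [hsj]
      · rw [if_neg h2]; ring
  | add p q hp hq =>
    simp [hp, hq, mul_add]

lemma eval_hasFDerivAt {m : ℕ} (p : MvPolynomial (Fin m) ℝ) (x : Fin m → ℝ) :
    HasFDerivAt (fun y => MvPolynomial.eval y p)
      (rowDeriv m (fun s => MvPolynomial.eval x (MvPolynomial.pderiv s p))) x := by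
  classical
  induction p using MvPolynomial.induction_on with
  | C a =>
    have h0 : rowDeriv m (fun s => MvPolynomial.eval x (MvPolynomial.pderiv s (MvPolynomial.C a)))
        = 0 := by
      ext v; simp [rowDeriv_apply]
    rw [h0]
    simp only [MvPolynomial.eval_C]
    exact hasFDerivAt_const a x
  | add p q hp hq =>
    have h : HasFDerivAt (fun y => MvPolynomial.eval y p + MvPolynomial.eval y q) _ x := hp.add hq
    convert! h using 1
    · funext y; simp
    · ext v; simp [rowDeriv_apply, add_mul, Finset.sum_add_distrib]
  | mul_X p n hp =>
    have hn := (ContinuousLinearMap.proj n : (Fin m → ℝ) →L[ℝ] ℝ).hasFDerivAt (x := x)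
    have h : HasFDerivAt (fun y => MvPolynomial.eval y p * (ContinuousLinearMap.proj n : (Fin m → ℝ) →L[ℝ] ℝ) y) _ x :=
      hp.mul hn
    convert! h using 1
    · funext y; simp
    · ext v
      simp [rowDeriv_apply, MvPolynomial.pderiv_mul, MvPolynomial.pderiv_X, Pi.single_apply,
        mul_add, add_mul, mul_ite, ite_mul, apply_ite (MvPolynomial.eval x),
        Finset.sum_add_distrib, Finset.sum_ite_eq,
        Finset.mul_sum, mul_comm, mul_assoc, mul_left_comm]

/-- **Theorem 3: necessary coefficient-set condition for diagonal `D`.**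
If `H` is a scalar function whose gradient is `h(x)·D` for a diagonal matrix `D` with
strictly positive diagonal entries, then for every monomial `α` appearing in `h_i` with
`α_j ≥ 1`, the monomial `α + e_i − e_j` appears in `h_j`. -/
theorem diagonal_D_coefficient_condition (m : ℕ) (hm : 1 ≤ m)
    (h : Fin m → MvPolynomial (Fin m) ℝ)
    (d : Fin m → ℝ) (hd : ∀ i, 0 < d i)
    (H : (Fin m → ℝ) → ℝ)
    (hH : ∀ x : Fin m → ℝ,
      HasFDerivAt H (rowDeriv m (fun s => MvPolynomial.eval x (h s) * d s)) x)
    (i j : Fin m) (α : Fin m →₀ ℕ)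
    (hα : MvPolynomial.coeff α (h i) ≠ 0) (hαj : 1 ≤ α j) :
    MvPolynomial.coeff (α + Finsupp.single i 1 - Finsupp.single j 1) (h j) ≠ 0 := by
  classical
  by_cases hij : i = j
  · subst hij
    simpa [add_tsub_cancel_right] using hα
  have key : ∀ x : Fin m → ℝ,
      d i * MvPolynomial.eval x (MvPolynomial.pderiv j (h i))
        = d j * MvPolynomial.eval x (MvPolynomial.pderiv i (h j)) := by
    intro x
    set B' : (Fin m → ℝ) →L[ℝ] ((Fin m → ℝ) →L[ℝ] ℝ) :=
      ∑ s : Fin m,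
        ((d s • rowDeriv m (fun t => MvPolynomial.eval x (MvPolynomial.pderiv t (h s)))).smulRight
          (ContinuousLinearMap.proj s)) with hB'
    have hB : HasFDerivAt
        (fun y => rowDeriv m (fun s => MvPolynomial.eval y (h s) * d s)) B' x := by
      have hrw : (fun y => rowDeriv m (fun s => MvPolynomial.eval y (h s) * d s))
          = fun y => ∑ s : Fin m, (MvPolynomial.eval y (h s) * d s) •
              (ContinuousLinearMap.proj s : (Fin m → ℝ) →L[ℝ] ℝ) := rfl
      rw [hrw, hB']
      apply HasFDerivAt.fun_sum
      intro s _
      exact ((eval_hasFDerivAt (h s) x).mul_const (d s)).smul_const (ContinuousLinearMap.proj s : (Fin m → ℝ) →L[ℝ] ℝ)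
    have sym := second_derivative_symmetric hH hB (Pi.single j 1) (Pi.single i 1)
    rw [hB'] at sym
    simp only [ContinuousLinearMap.sum_apply, ContinuousLinearMap.smulRight_apply,
      ContinuousLinearMap.smul_apply, ContinuousLinearMap.proj_apply, rowDeriv_apply,
      Pi.single_apply, smul_eq_mul, mul_ite, mul_one, mul_zero,
      Finset.sum_ite_eq, Finset.sum_ite_eq', Finset.mem_univ, if_true] at sym
    exact sym
  have hpoly : MvPolynomial.C (d i) * MvPolynomial.pderiv j (h i)
      = MvPolynomial.C (d j) * MvPolynomial.pderiv i (h j) :=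
    MvPolynomial.funext fun x => by simpa using key x
  set β : Fin m →₀ ℕ := α - Finsupp.single j 1 with hβ
  have hco := congrArg (MvPolynomial.coeff β) hpoly
  rw [MvPolynomial.coeff_C_mul, MvPolynomial.coeff_C_mul,
    coeff_pderiv_aux, coeff_pderiv_aux] at hco
  have hβj : β + Finsupp.single j 1 = α := by
    ext t
    simp only [hβ, Finsupp.add_apply, Finsupp.tsub_apply, Finsupp.single_apply]
    rcases eq_or_ne j t with rfl | hjt <;>
      first
      | (split_ifs <;> omega)
      | omega
  rw [hβj] at hco
  have hL : d i * (((β j : ℝ) + 1) * MvPolynomial.coeff α (h i)) ≠ 0 := by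
    refine mul_ne_zero (ne_of_gt (hd i)) (mul_ne_zero ?_ hα)
    positivity
  rw [hco] at hL
  have hcoeff : MvPolynomial.coeff (β + Finsupp.single i 1) (h j) ≠ 0 := by
    intro h0
    rw [h0] at hL
    simp at hL
  have hfin : α + Finsupp.single i 1 - Finsupp.single j 1 = β + Finsupp.single i 1 := by
    ext t
    simp only [hβ, Finsupp.add_apply, Finsupp.tsub_apply, Finsupp.single_apply]
    have hαjt : 1 ≤ α j := hαj
    rcases eq_or_ne j t with rfl | hjt <;>
      first
      | (split_ifs <;> omega)
      | omega
  rw [hfin]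
  exact hcoeff

end
end
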